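/- Let U : ℝ² → ℝ be a bounded C¹ function that is weakly subharmonic, i.e. ∫_{ℝ²} ⟨∇U, ∇ψ⟩ dx ≤ 0 for every nonnegative smooth compactly supported function ψ on ℝ². Then U is constant. -/

import Mathlib

set_option maxHeartbeats 1000000
set_option synthInstance.maxHeartbeats 400000

open MeasureTheory Metric

noncomputable section LiouvilleAux

local notation "EE" => EuclideanSpace ℝ (Fin 2)

/-- Smooth decreasing cutoff: `1` on `(-∞,2]`, `0` on `[3,∞)`. -/
def lzeta : ℝ → ℝ := fun s => 1 - Real.smoothTransition (s - 2)

lemma lzeta_contDiff : ContDiff ℝ (⊤ : ℕ∞) lzeta :=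
  contDiff_const.sub (Real.smoothTransition.contDiff.comp (contDiff_id.sub contDiff_const))

lemma lzeta_one {s : ℝ} (h : s ≤ 2) : lzeta s = 1 := by
  have h0 : Real.smoothTransition (s - 2) = 0 :=
    Real.smoothTransition.zero_of_nonpos (by linarith)
  simp [lzeta, h0]

lemma lzeta_zero {s : ℝ} (h : 3 ≤ s) : lzeta s = 0 := by
  have h0 : Real.smoothTransition (s - 2) = 1 :=
    Real.smoothTransition.one_of_one_le (by linarith)
  simp [lzeta, h0]

lemma lzeta_nonneg (s : ℝ) : 0 ≤ lzeta s := by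
  simp [lzeta, Real.smoothTransition.le_one]

lemma lzeta_le_one (s : ℝ) : lzeta s ≤ 1 := by
  simp [lzeta, Real.smoothTransition.nonneg]

lemma lzeta_deriv_zero_lt {s : ℝ} (h : s < 2) : deriv lzeta s = 0 := by
  have : lzeta =ᶠ[nhds s] (fun _ => 1) := by
    filter_upwards [Iio_mem_nhds h] with t ht using lzeta_one (le_of_lt ht)
  rw [this.deriv_eq, deriv_const]

lemma lzeta_deriv_zero_gt {s : ℝ} (h : 3 < s) : deriv lzeta s = 0 := by
  have : lzeta =ᶠ[nhds s] (fun _ => 0) := by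
    filter_upwards [Ioi_mem_nhds h] with t ht using lzeta_zero (le_of_lt ht)
  rw [this.deriv_eq, deriv_const]

lemma lzeta_deriv_bound : ∃ M : ℝ, 0 ≤ M ∧ ∀ s, |deriv lzeta s| ≤ M := by
  obtain ⟨C, hC⟩ := (isCompact_Icc (a := (2:ℝ)) (b := 3)).exists_bound_of_continuousOn
    ((lzeta_contDiff.continuous_deriv (by simp)).continuousOn)
  refine ⟨max C 0, le_max_right _ _, fun s => ?_⟩
  rcases lt_or_ge s 2 with h | h
  · simp [lzeta_deriv_zero_lt h]
  rcases le_or_gt s 3 with h' | h'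
  · exact le_trans (hC s ⟨h, h'⟩) (le_max_left _ _)
  · simp [lzeta_deriv_zero_gt h']

/-- dyadic-type cutoff at scale `4^k`. -/
def etaK (k : ℕ) : EE → ℝ := fun x => lzeta (‖x‖ ^ 2 * (((4:ℝ) ^ k) ^ 2)⁻¹)

lemma etaK_contDiff (k : ℕ) : ContDiff ℝ (⊤ : ℕ∞) (etaK k) :=
  lzeta_contDiff.comp ((contDiff_norm_sq ℝ).mul contDiff_const)

lemma etaK_nonneg (k : ℕ) (x : EE) : 0 ≤ etaK k x := lzeta_nonneg _

lemma etaK_one {k : ℕ} {x : EE} (h : ‖x‖ ≤ 4 ^ k) : etaK k x = 1 := by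
  have h4 : (0:ℝ) < 4 ^ k := by positivity
  apply lzeta_one
  rw [mul_inv_le_iff₀ (by positivity)]
  nlinarith [norm_nonneg x]

lemma etaK_zero {k : ℕ} {x : EE} (h : 2 * 4 ^ k ≤ ‖x‖) : etaK k x = 0 := by
  have h4 : (0:ℝ) < 4 ^ k := by positivity
  apply lzeta_zero
  rw [le_mul_inv_iff₀ (by positivity)]
  nlinarith

lemma etaK_hasFDerivAt (k : ℕ) (x : EE) :
    HasFDerivAt (etaK k)
      ((deriv lzeta (‖x‖ ^ 2 * (((4:ℝ) ^ k) ^ 2)⁻¹)) •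
        ((((4:ℝ) ^ k) ^ 2)⁻¹ • (2 • innerSL ℝ x))) x := by
  have h1 : HasFDerivAt (fun y : EE => ‖y‖ ^ 2 * (((4:ℝ) ^ k) ^ 2)⁻¹)
      ((((4:ℝ) ^ k) ^ 2)⁻¹ • (2 • innerSL ℝ x)) x := by
    exact ((hasStrictFDerivAt_norm_sq x).hasFDerivAt).mul_const ((((4:ℝ) ^ k) ^ 2)⁻¹)
  have h2 : HasDerivAt lzeta (deriv lzeta (‖x‖ ^ 2 * (((4:ℝ) ^ k) ^ 2)⁻¹))
      (‖x‖ ^ 2 * (((4:ℝ) ^ k) ^ 2)⁻¹) :=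
    ((lzeta_contDiff.differentiable (by simp)) _).hasDerivAt
  exact h2.comp_hasFDerivAt x h1

lemma etaK_fderiv_eq (k : ℕ) (x : EE) :
    fderiv ℝ (etaK k) x =
      (deriv lzeta (‖x‖ ^ 2 * (((4:ℝ) ^ k) ^ 2)⁻¹)) •
        ((((4:ℝ) ^ k) ^ 2)⁻¹ • (2 • innerSL ℝ x)) :=
  (etaK_hasFDerivAt k x).fderiv

lemma etaK_fderiv_zero_of_lt {k : ℕ} {x : EE} (h : ‖x‖ ^ 2 < 2 * (4 ^ k) ^ 2) :
    fderiv ℝ (etaK k) x = 0 := by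
  rw [etaK_fderiv_eq, lzeta_deriv_zero_lt, zero_smul]
  rw [mul_inv_lt_iff₀ (by positivity)]
  linarith

lemma etaK_fderiv_zero_of_gt {k : ℕ} {x : EE} (h : 3 * (4 ^ k) ^ 2 < ‖x‖ ^ 2) :
    fderiv ℝ (etaK k) x = 0 := by
  rw [etaK_fderiv_eq, lzeta_deriv_zero_gt, zero_smul]
  rw [lt_mul_inv_iff₀ (by positivity)]
  linarith

lemma etaK_fderiv_support {k : ℕ} {x : EE} (h : fderiv ℝ (etaK k) x ≠ 0) :
    2 * (4 ^ k) ^ 2 ≤ ‖x‖ ^ 2 ∧ ‖x‖ ^ 2 ≤ 3 * (4 ^ k) ^ 2 := by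
  constructor
  · by_contra hc; exact h (etaK_fderiv_zero_of_lt (by linarith))
  · by_contra hc; exact h (etaK_fderiv_zero_of_gt (by linarith))

lemma etaK_support_disjoint {j k : ℕ} {x : EE} (hj : fderiv ℝ (etaK j) x ≠ 0)
    (hk : fderiv ℝ (etaK k) x ≠ 0) : j = k := by
  by_contra hne
  wlog hlt : j < k generalizing j k
  · exact this hk hj (Ne.symm hne) (by omega)
  have h1 := etaK_fderiv_support hj
  have h2 := etaK_fderiv_support hk
  have hle : ((4:ℝ) ^ j) ^ 2 * 16 ≤ ((4 ^ k : ℝ)) ^ 2 := by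
    have h' : ((4:ℝ) ^ (j+1)) ^ 2 ≤ ((4:ℝ) ^ k) ^ 2 := by
      gcongr <;> [norm_num; omega]
    have e : ((4:ℝ) ^ (j+1)) ^ 2 = ((4:ℝ) ^ j) ^ 2 * 16 := by rw [pow_succ]; ring
    linarith [e ▸ h']
  have ht : (0:ℝ) < ((4:ℝ) ^ j) ^ 2 := by positivity
  nlinarith [h1.2, h2.1, hle, ht]

/-- bound constant for `lzeta`. -/
def Mz : ℝ := lzeta_deriv_bound.choose

lemma Mz_nonneg : 0 ≤ Mz := lzeta_deriv_bound.choose_spec.1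

lemma Mz_bound (s : ℝ) : |deriv lzeta s| ≤ Mz := lzeta_deriv_bound.choose_spec.2 s

lemma etaK_fderiv_norm_le (k : ℕ) (x : EE) :
    ‖fderiv ℝ (etaK k) x‖ ≤ 4 * Mz / 4 ^ k := by
  have h4 : (0:ℝ) < 4 ^ k := by positivity
  rcases le_or_gt ‖x‖ (2 * 4 ^ k) with h | h
  · rw [etaK_fderiv_eq]
    rw [norm_smul, norm_smul, ← Nat.cast_smul_eq_nsmul ℝ, norm_smul, innerSL_apply_norm]
    have h1 : |deriv lzeta (‖x‖ ^ 2 * (((4:ℝ) ^ k) ^ 2)⁻¹)| ≤ Mz := Mz_bound _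
    have h2 : ‖(((4:ℝ) ^ k) ^ 2)⁻¹‖ = (((4:ℝ) ^ k) ^ 2)⁻¹ := by
      rw [Real.norm_eq_abs, abs_of_pos (by positivity)]
    have h3' : ‖((2:ℕ) : ℝ)‖ = 2 := by simp
    rw [Real.norm_eq_abs, h2, h3']
    refine le_trans (mul_le_mul (Mz_bound _)
      (mul_le_mul_of_nonneg_left (show (2:ℝ) * ‖x‖ ≤ 2 * (2 * 4 ^ k) by linarith)
        (by positivity : (0:ℝ) ≤ (((4:ℝ) ^ k) ^ 2)⁻¹))
      (by positivity) Mz_nonneg) (le_of_eq ?_)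
    field_simp; ring
  · have : fderiv ℝ (etaK k) x = 0 := by
      apply etaK_fderiv_zero_of_gt
      nlinarith
    rw [this]
    simp only [norm_zero]
    exact div_nonneg (by linarith [Mz_nonneg]) (le_of_lt h4)

/-- Unit-ball measure constant. -/
def kb : ℝ := (volume (ball (0:EE) 1)).toReal

lemma kb_nonneg : 0 ≤ kb := ENNReal.toReal_nonneg

lemma volume_closedBall_EE (r : ℝ) (hr : 0 ≤ r) :
    (volume (closedBall (0:EE) r)).toReal = r ^ 2 * kb := by
  rw [Measure.addHaar_closedBall volume 0 hr]
  rw [ENNReal.toReal_mul, ENNReal.toReal_ofReal (by positivity)]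
  congr 2
  rw [finrank_euclideanSpace_fin]

/-- support helper: functions vanishing where `η` vanishes, `η` cpt supp. -/
lemma hcs_of_support_subset {F G : Type*} [NormedAddCommGroup F] [NormedAddCommGroup G]
    {f : EE → F} {η : EE → G} (hη : HasCompactSupport η) (h : ∀ x, η x = 0 → f x = 0) :
    HasCompactSupport f := by
  apply HasCompactSupport.intro hη
  intro x hx
  exact h x (image_eq_zero_of_notMem_tsupport hx)

/-- integrability helper: continuous functions vanishing where `η` vanishes, `η` cpt supp. -/
lemma integrable_of_support_subset {F G : Type*} [NormedAddCommGroup F] [NormedAddCommGroup G]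
    {f : EE → F} {η : EE → G} (hf : Continuous f)
    (hη : HasCompactSupport η) (h : ∀ x, η x = 0 → f x = 0) : Integrable f volume :=
  hf.integrable_of_hasCompactSupport (hcs_of_support_subset hη h)

lemma etaK_hasCompactSupport (k : ℕ) : HasCompactSupport (etaK k) := by
  apply HasCompactSupport.intro (isCompact_closedBall (0:EE) (2 * 4 ^ k))
  intro x hx
  apply etaK_zero
  simp only [mem_closedBall, dist_zero_right, not_le] at hx
  linarith

lemma etaK_fderiv_sq_integral (k : ℕ) :
    ∫ x : EE, ‖fderiv ℝ (etaK k) x‖ ^ 2 ≤ 64 * Mz ^ 2 * kb := by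
  have h4 : (0:ℝ) < 4 ^ k := by positivity
  set c : ℝ := (4 * Mz / 4 ^ k) ^ 2 with hc
  have hcont : Continuous fun x : EE => ‖fderiv ℝ (etaK k) x‖ ^ 2 := by
    exact (((etaK_contDiff k).continuous_fderiv (by simp)).norm).pow 2
  have hzero : ∀ x : EE, x ∉ closedBall (0:EE) (2 * 4 ^ k) → ‖fderiv ℝ (etaK k) x‖ ^ 2 = 0 := by
    intro x hx
    simp only [mem_closedBall, dist_zero_right, not_le] at hx
    rw [etaK_fderiv_zero_of_gt (by nlinarith)]
    simp
  have hint : Integrable (fun x : EE => ‖fderiv ℝ (etaK k) x‖ ^ 2) volume := by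
    apply hcont.integrable_of_hasCompactSupport
    exact HasCompactSupport.intro (isCompact_closedBall _ _) hzero
  rw [← MeasureTheory.setIntegral_eq_integral_of_forall_compl_eq_zero (s := closedBall 0 (2 * 4^k))
    (fun x hx => hzero x hx)]
  calc ∫ x in closedBall (0:EE) (2 * 4 ^ k), ‖fderiv ℝ (etaK k) x‖ ^ 2
      ≤ ∫ _x in closedBall (0:EE) (2 * 4 ^ k), c := by
        apply setIntegral_mono_on (hint.integrableOn) (integrableOn_const ?_) 
          measurableSet_closedBall
        · intro x _
          rw [hc]
          have := etaK_fderiv_norm_le k x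
          have hn : (0:ℝ) ≤ ‖fderiv ℝ (etaK k) x‖ := norm_nonneg _
          nlinarith
        · exact measure_closedBall_lt_top.ne
    _ = c * (volume (closedBall (0:EE) (2 * 4 ^ k))).toReal := by
        rw [setIntegral_const, smul_eq_mul, mul_comm, measureReal_def]
    _ ≤ 64 * Mz ^ 2 * kb := by
        rw [volume_closedBall_EE _ (by positivity), hc]
        have : (4 * Mz / 4 ^ k) ^ 2 * ((2 * 4 ^ k) ^ 2 * kb) = 64 * Mz ^ 2 * kb := by
          field_simp; ring
        rw [this]

/-- The summed cutoff. -/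
def etaN (N : ℕ) : EE → ℝ := fun x => ∑ k ∈ Finset.range N, etaK k x

lemma etaN_contDiff (N : ℕ) : ContDiff ℝ (⊤ : ℕ∞) (etaN N) :=
  ContDiff.sum fun k _ => etaK_contDiff k

lemma etaN_nonneg (N : ℕ) (x : EE) : 0 ≤ etaN N x :=
  Finset.sum_nonneg fun k _ => etaK_nonneg k x

lemma etaN_hasCompactSupport (N : ℕ) : HasCompactSupport (etaN N) := by
  apply HasCompactSupport.intro (isCompact_closedBall (0:EE) (2 * 4 ^ N))
  intro x hx
  simp only [mem_closedBall, dist_zero_right, not_le] at hx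
  apply Finset.sum_eq_zero
  intro k hk
  apply etaK_zero
  have : (4:ℝ) ^ k ≤ 4 ^ N := by
    apply pow_le_pow_right₀ (by norm_num) (le_of_lt (Finset.mem_range.1 hk))
  linarith

lemma etaN_ge {N j : ℕ} (hjN : j ≤ N) {x : EE} (hx : ‖x‖ ≤ 4 ^ j) :
    (N : ℝ) - j ≤ etaN N x := by
  have hsub : Finset.Ico j N ⊆ Finset.range N := by
    intro k hk
    simp only [Finset.mem_Ico] at hk
    exact Finset.mem_range.2 hk.2
  have h1 : ∑ k ∈ Finset.Ico j N, etaK k x ≤ etaN N x :=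
    Finset.sum_le_sum_of_subset_of_nonneg hsub fun k _ _ => etaK_nonneg k x
  have h2 : ∑ k ∈ Finset.Ico j N, etaK k x = (N - j : ℕ) := by
    rw [Finset.sum_congr rfl fun k hk => ?_, Finset.sum_const, Nat.card_Ico, nsmul_eq_mul,
      mul_one]
    apply etaK_one
    have : (4:ℝ) ^ j ≤ 4 ^ k := by
      apply pow_le_pow_right₀ (by norm_num) (Finset.mem_Ico.1 hk).1
    linarith
  rw [h2] at h1
  calc (N : ℝ) - j ≤ ((N - j : ℕ) : ℝ) := by
        rw [Nat.cast_sub hjN]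
    _ ≤ etaN N x := h1

lemma etaN_hasFDerivAt (N : ℕ) (x : EE) :
    HasFDerivAt (etaN N) (∑ k ∈ Finset.range N, fderiv ℝ (etaK k) x) x := by
  apply HasFDerivAt.fun_sum
  intro k _
  rw [etaK_fderiv_eq]
  exact etaK_hasFDerivAt k x

lemma etaN_fderiv_eq (N : ℕ) (x : EE) :
    fderiv ℝ (etaN N) x = ∑ k ∈ Finset.range N, fderiv ℝ (etaK k) x :=
  (etaN_hasFDerivAt N x).fderiv

lemma etaN_fderiv_sq_le (N : ℕ) (x : EE) :
    ‖fderiv ℝ (etaN N) x‖ ^ 2 ≤ ∑ k ∈ Finset.range N, ‖fderiv ℝ (etaK k) x‖ ^ 2 := by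
  rw [etaN_fderiv_eq]
  by_cases h : ∀ k ∈ Finset.range N, fderiv ℝ (etaK k) x = 0
  · rw [Finset.sum_eq_zero h]
    simp only [norm_zero, ne_eq, OfNat.ofNat_ne_zero, not_false_eq_true, zero_pow]
    exact Finset.sum_nonneg fun k _ => by positivity
  · push_neg at h
    obtain ⟨k₀, hk₀, hne⟩ := h
    have hsum : ∑ k ∈ Finset.range N, fderiv ℝ (etaK k) x = fderiv ℝ (etaK k₀) x := by
      apply Finset.sum_eq_single_of_mem k₀ hk₀
      intro j _ hj
      by_contra hjne
      exact hj (etaK_support_disjoint hjne hne)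
    rw [hsum]
    apply Finset.single_le_sum (f := fun k => ‖fderiv ℝ (etaK k) x‖ ^ 2)
      (fun k _ => by positivity) hk₀

lemma etaN_fderiv_continuous (N : ℕ) : Continuous fun x : EE => fderiv ℝ (etaN N) x :=
  (etaN_contDiff N).continuous_fderiv (by simp)

lemma etaN_energy (N : ℕ) :
    ∫ x : EE, ‖fderiv ℝ (etaN N) x‖ ^ 2 ≤ N * (64 * Mz ^ 2 * kb) := by
  have hint : ∀ k : ℕ, Integrable (fun x : EE => ‖fderiv ℝ (etaK k) x‖ ^ 2) volume := by
    intro k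
    apply Continuous.integrable_of_hasCompactSupport
    · exact (((etaK_contDiff k).continuous_fderiv (by simp)).norm).pow 2
    · apply HasCompactSupport.intro (isCompact_closedBall (0:EE) (2 * 4 ^ k))
      intro x hx
      simp only [mem_closedBall, dist_zero_right, not_le] at hx
      rw [etaK_fderiv_zero_of_gt (by nlinarith [pow_pos (show (0:ℝ) < 4 by norm_num) k])]
      simp
  have hzeroN : ∀ x : EE, x ∉ closedBall (0:EE) (2 * 4 ^ N) →
      ‖fderiv ℝ (etaN N) x‖ ^ 2 = 0 := by
    intro x hx
    simp only [mem_closedBall, dist_zero_right, not_le] at hx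
    rw [etaN_fderiv_eq, Finset.sum_eq_zero, norm_zero]
    · ring
    intro k hk
    have h4 : (4:ℝ) ^ k ≤ 4 ^ N :=
      pow_le_pow_right₀ (by norm_num) (le_of_lt (Finset.mem_range.1 hk))
    apply etaK_fderiv_zero_of_gt
    have h4k : (0:ℝ) < 4 ^ k := by positivity
    nlinarith
  have hintN : Integrable (fun x : EE => ‖fderiv ℝ (etaN N) x‖ ^ 2) volume := by
    apply Continuous.integrable_of_hasCompactSupport
    · exact ((etaN_fderiv_continuous N).norm).pow 2
    · exact HasCompactSupport.intro (isCompact_closedBall _ _) hzeroN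
  calc ∫ x : EE, ‖fderiv ℝ (etaN N) x‖ ^ 2
      ≤ ∫ x : EE, ∑ k ∈ Finset.range N, ‖fderiv ℝ (etaK k) x‖ ^ 2 := by
        apply integral_mono hintN (integrable_finset_sum _ fun k _ => hint k)
        exact fun x => etaN_fderiv_sq_le N x
    _ = ∑ k ∈ Finset.range N, ∫ x : EE, ‖fderiv ℝ (etaK k) x‖ ^ 2 :=
        integral_finset_sum _ fun k _ => hint k
    _ ≤ ∑ _k ∈ Finset.range N, (64 * Mz ^ 2 * kb) :=
        Finset.sum_le_sum fun k _ => etaK_fderiv_sq_integral k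
    _ = N * (64 * Mz ^ 2 * kb) := by
        rw [Finset.sum_const, Finset.card_range, nsmul_eq_mul]

section Core

variable {U : EE → ℝ}

lemma inner_gradient_eq (f : EE → ℝ) (x w : EE) :
    (inner ℝ (gradient f x) w : ℝ) = fderiv ℝ f x w := by
  rw [gradient, ← InnerProductSpace.toDual_apply_apply, LinearIsometryEquiv.apply_symm_apply]

lemma gradient_continuous (hU : ContDiff ℝ 1 U) : Continuous fun x => gradient U x := by
  simp only [gradient]
  exact (LinearIsometryEquiv.continuous _).comp (hU.continuous_fderiv one_ne_zero)

/-- The key Caccioppoli-type step, obtained by testing weak subharmonicity against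
`η² (U_mollified + B)`. -/
lemma cacc_step (hU : ContDiff ℝ 1 U) {B : ℝ} (hB : ∀ x, |U x| ≤ B)
    (hsub : ∀ ψ : EE → ℝ, ContDiff ℝ (⊤ : ℕ∞) ψ → HasCompactSupport ψ → (∀ x, 0 ≤ ψ x) →
      ∫ x, (inner ℝ (gradient U x) (gradient ψ x) : ℝ) ≤ 0)
    {η : EE → ℝ} (hη : ContDiff ℝ (⊤ : ℕ∞) η) (hηc : HasCompactSupport η)
    (hηn : ∀ x, 0 ≤ η x) {γ : ℝ} (hγ : 0 < γ) :
    ∫ x, (η x * ‖gradient U x‖) ^ 2 ≤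
      4 * B * (∫ x, (η x * ‖gradient U x‖) * ‖fderiv ℝ η x‖) +
        γ * (∫ x, (η x) ^ 2 * ‖gradient U x‖) := by
  set v : EE → EE := fun x => gradient U x with hv
  set DU : EE → (EE →L[ℝ] ℝ) := fun x => fderiv ℝ U x with hDU
  set Dη : EE → (EE →L[ℝ] ℝ) := fun x => fderiv ℝ η x with hDη
  have hDUc : Continuous DU := hU.continuous_fderiv one_ne_zero
  have hDηc : Continuous Dη := hη.continuous_fderiv (by simp)
  have hvc : Continuous v := gradient_continuous hU
  have hB0 : 0 ≤ B := le_trans (abs_nonneg _) (hB 0)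
  have key1 : ∀ x w, (inner ℝ (v x) w : ℝ) = DU x w := fun x w => inner_gradient_eq U x w
  have key2 : ∀ x, DU x (v x) = ‖v x‖ ^ 2 := by
    intro x
    rw [← key1 x (v x), real_inner_self_eq_norm_sq]
  -- the compact sets
  set K : Set EE := tsupport η with hK
  have hKc : IsCompact K := hηc
  have hKcl : ∀ x, x ∉ K → η x = 0 := fun x hx => image_eq_zero_of_notMem_tsupport hx
  set K1 : Set EE := Metric.cthickening 1 K with hK1
  have hK1c : IsCompact K1 := hKc.cthickening
  -- uniform continuity modulus
  have hucont := (hK1c.uniformContinuousOn_of_continuous hDUc.continuousOn)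
  rw [Metric.uniformContinuousOn_iff] at hucont
  obtain ⟨δ, hδ, hmod⟩ := hucont γ hγ
  set ε : ℝ := min δ 1 / 2 with hε
  have hε0 : 0 < ε := by
    have := lt_min hδ one_pos
    positivity
  have hε1 : ε ≤ 1 / 2 := by
    have : min δ 1 ≤ 1 := min_le_right _ _
    rw [hε]; linarith
  have hεδ : ε < δ := by
    have : min δ 1 ≤ δ := min_le_left _ _
    rw [hε]; linarith
  -- the bump function
  set φ : ContDiffBump (0 : EE) := ⟨ε/2, ε, by positivity, by linarith⟩ with hφ
  set φn : EE → ℝ := φ.normed volume with hφn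
  have hφc : Continuous φn := φ.continuous_normed
  have hφint : Integrable φn volume := φ.integrable_normed
  have hφnonneg : ∀ t, 0 ≤ φn t := φ.nonneg_normed
  have hφone : ∫ t, φn t = 1 := φ.integral_normed
  have hφcs : HasCompactSupport φn := φ.hasCompactSupport_normed
  have hφsupp : ∀ t : EE, t ∉ ball (0:EE) ε → φn t = 0 := by
    intro t ht
    have : t ∉ Function.support φn := by
      rw [hφn, φ.support_normed_eq]
      exact ht
    simpa using Function.notMem_support.1 this
  -- the mollification
  set W : EE → ℝ := fun x => ∫ t, φn t • U (x - t) with hW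
  have hWconv : W = MeasureTheory.convolution φn U (ContinuousLinearMap.lsmul ℝ ℝ) volume := by
    funext x
    rw [MeasureTheory.convolution_def]
    simp only [ContinuousLinearMap.lsmul_apply]
    rfl
  have hWc : ContDiff ℝ (⊤ : ℕ∞) W := by
    rw [hWconv]
    exact HasCompactSupport.contDiff_convolution_left _ hφcs φ.contDiff_normed
      (hU.continuous.locallyIntegrable)
  -- integrability of mollification integrands
  have hsmul_int : ∀ (x : EE) (G : EE → ℝ), Continuous G →
      Integrable (fun t => φn t • G (x - t)) volume := by
    intro x G hG
    apply integrable_of_support_subset (η := φn)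
      (hφc.smul (hG.comp (continuous_const.sub continuous_id))) hφcs
    intro t ht
    simp [Pi.smul_apply, ht]
  have hsmul_int' : ∀ (x : EE), Integrable (fun t => φn t • DU (x - t)) volume := by
    intro x
    apply integrable_of_support_subset (η := φn)
      (hφc.smul (hDUc.comp (continuous_const.sub continuous_id))) hφcs
    intro t ht
    simp [Pi.smul_apply, ht]
  -- bound on W
  have hWbd : ∀ x, |W x| ≤ B := by
    intro x
    rw [← Real.norm_eq_abs]
    have hle : ‖W x‖ ≤ ∫ t, φn t * B := by
      apply norm_integral_le_of_norm_le (hφint.mul_const B)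
      apply Filter.Eventually.of_forall
      intro t
      rw [norm_smul, Real.norm_eq_abs (U _), Real.norm_eq_abs, abs_of_nonneg (hφnonneg t)]
      exact mul_le_mul_of_nonneg_left (hB _) (hφnonneg t)
    calc ‖W x‖ ≤ ∫ t, φn t * B := hle
      _ = B := by rw [integral_mul_const, hφone, one_mul]
  -- derivative of W
  set D : EE → (EE →L[ℝ] ℝ) := fun x => ∫ t, φn t • DU (x - t) with hD
  have hWD : ∀ x₀ : EE, HasFDerivAt W (D x₀) x₀ := by
    intro x₀
    obtain ⟨C, hC⟩ := (isCompact_closedBall x₀ 2).exists_bound_of_continuousOn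
      hDUc.continuousOn
    have hC0 : 0 ≤ C :=
      le_trans (norm_nonneg (DU x₀)) (hC x₀ (by simp [Metric.mem_closedBall]))
    have key := hasFDerivAt_integral_of_dominated_of_fderiv_le (μ := volume)
      (F := fun (x t : EE) => φn t • U (x - t)) (F' := fun (x t : EE) => φn t • DU (x - t))
      (x₀ := x₀) (bound := fun t => φn t * C) (s := ball x₀ 1) (ball_mem_nhds x₀ one_pos)
      ?_ ?_ ?_ ?_ ?_ ?_
    · exact key
    · apply Filter.Eventually.of_forall
      intro x
      exact (hφc.smul (hU.continuous.comp (continuous_const.sub continuous_id))).aestronglyMeasurable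
    · exact hsmul_int x₀ U hU.continuous
    · exact (hφc.smul (hDUc.comp (continuous_const.sub continuous_id))).aestronglyMeasurable
    · apply Filter.Eventually.of_forall
      intro t x hx
      show ‖φn t • DU (x - t)‖ ≤ φn t * C
      by_cases ht : t ∈ ball (0:EE) ε
      · rw [norm_smul (φn t) (DU (x - t)), Real.norm_eq_abs, abs_of_nonneg (hφnonneg t)]
        apply mul_le_mul_of_nonneg_left _ (hφnonneg t)
        apply hC
        rw [Metric.mem_closedBall]
        have h1 : dist x x₀ < 1 := Metric.mem_ball.1 hx
        have h2 : ‖t‖ < ε := by simpa using Metric.mem_ball.1 ht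
        calc dist (x - t) x₀ ≤ dist (x - t) x + dist x x₀ := dist_triangle _ _ _
          _ = ‖t‖ + dist x x₀ := by
              rw [dist_eq_norm]
              congr 1
              simp
          _ ≤ 2 := by linarith
      · rw [hφsupp t ht]; simp
    · exact hφint.mul_const C
    · apply Filter.Eventually.of_forall
      intro t x _
      have h1 : HasFDerivAt (fun y : EE => y - t) (ContinuousLinearMap.id ℝ EE) x :=
        (hasFDerivAt_id x).sub_const t
      have h2 : HasFDerivAt (fun y : EE => U (y - t)) (DU (x - t)) x := by
        have := ((hU.differentiable one_ne_zero) (x - t)).hasFDerivAt.comp x h1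
        simpa [ContinuousLinearMap.comp_id, Function.comp_def] using this
      exact h2.const_smul (φn t)
  have hDW : ∀ x, fderiv ℝ W x = D x := fun x => (hWD x).fderiv
  -- closeness of D to DU on K
  have hclose : ∀ x ∈ K, ‖D x - DU x‖ ≤ γ := by
    intro x hx
    have hx1 : x ∈ K1 := Metric.self_subset_cthickening _ hx
    have e1 : ∫ t, φn t • DU x = DU x := by
      rw [integral_smul_const, hφone, one_smul]
    have e2 : D x - DU x = ∫ t, φn t • (DU (x - t) - DU x) := by
      rw [hD]
      simp only [smul_sub]
      rw [integral_sub (hsmul_int' x) (hφint.smul_const (DU x)), e1]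
    rw [e2]
    have hle : ‖∫ t, φn t • (DU (x - t) - DU x)‖ ≤ ∫ t, φn t * γ := by
      apply norm_integral_le_of_norm_le (hφint.mul_const γ)
      apply Filter.Eventually.of_forall
      intro t
      show ‖φn t • (DU (x - t) - DU x)‖ ≤ φn t * γ
      by_cases ht : t ∈ ball (0:EE) ε
      · rw [norm_smul (φn t) (DU (x - t) - DU x), Real.norm_eq_abs,
          abs_of_nonneg (hφnonneg t)]
        apply mul_le_mul_of_nonneg_left _ (hφnonneg t)
        have h2 : ‖t‖ < ε := by simpa using Metric.mem_ball.1 ht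
        have hxt1 : x - t ∈ K1 := by
          apply Metric.closedBall_subset_cthickening hx 1
          rw [Metric.mem_closedBall, dist_eq_norm]
          have he : x - t - x = -t := by abel
          rw [he, norm_neg]
          linarith
        have hd := hmod (x - t) hxt1 x hx1 (by
          rw [dist_eq_norm]
          have he : x - t - x = -t := by abel
          rw [he, norm_neg]
          linarith)
        rw [dist_eq_norm] at hd
        exact le_of_lt hd
      · rw [hφsupp t ht]; simp
    calc ‖∫ t, φn t • (DU (x - t) - DU x)‖ ≤ ∫ t, φn t * γ := hle
      _ = γ := by rw [integral_mul_const, hφone, one_mul]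
  -- test function
  set ψ : EE → ℝ := fun x => η x * η x * (W x + B) with hψ
  have hψc : ContDiff ℝ (⊤ : ℕ∞) ψ := (hη.mul hη).mul (hWc.add contDiff_const)
  have hψcs : HasCompactSupport ψ := by
    apply hcs_of_support_subset hηc
    intro x hx
    rw [hψ]
    simp [hx]
  have hψn : ∀ x, 0 ≤ ψ x := by
    intro x
    have := abs_le.1 (hWbd x)
    exact mul_nonneg (mul_nonneg (hηn x) (hηn x)) (by linarith [this.1])
  have htest := hsub ψ hψc hψcs hψn
  -- derivative of ψ
  have hηd : ∀ x, HasFDerivAt η (Dη x) x :=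
    fun x => ((hη.differentiable (by simp)) x).hasFDerivAt
  have hψD : ∀ x, HasFDerivAt ψ
      ((η x * η x) • D x + (W x + B) • (η x • Dη x + η x • Dη x)) x := by
    intro x
    exact ((hηd x).mul (hηd x)).mul ((hWD x).add_const B)
  -- the two integrand pieces
  set F1 : EE → ℝ := fun x => (W x + B) * (η x * (Dη x (v x)) + η x * (Dη x (v x))) with hF1
  set F2 : EE → ℝ := fun x => (η x * η x) * (D x (v x)) with hF2
  have hpoint : ∀ x, (inner ℝ (v x) (gradient ψ x) : ℝ) = F1 x + F2 x := by
    intro x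
    rw [real_inner_comm, inner_gradient_eq, (hψD x).fderiv]
    simp only [ContinuousLinearMap.add_apply, ContinuousLinearMap.smul_apply,
      ContinuousLinearMap.coe_smul', Pi.smul_apply, smul_eq_mul, hF1, hF2]
    ring
  -- continuity of the applied derivatives
  have hDv : Continuous fun x => D x (v x) := by
    have : Continuous fun x => fderiv ℝ W x :=
      hWc.continuous_fderiv (by simp)
    have hDc : Continuous D := by
      have he : D = fun x => fderiv ℝ W x := by funext x; rw [hDW]
      rw [he]; exact this
    exact hDc.clm_apply hvc
  have hDηv : Continuous fun x => Dη x (v x) := hDηc.clm_apply hvc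
  -- integrability
  have hF1int : Integrable F1 volume := by
    apply integrable_of_support_subset (η := η) _ hηc
    · intro x hx; rw [hF1]; simp [hx]
    · exact ((hWc.continuous.add continuous_const)).mul
        ((hη.continuous.mul hDηv).add (hη.continuous.mul hDηv))
  have hF2int : Integrable F2 volume := by
    apply integrable_of_support_subset (η := η) _ hηc
    · intro x hx; rw [hF2]; simp [hx]
    · exact (hη.continuous.mul hη.continuous).mul hDv
  have hXint : Integrable (fun x => (η x * ‖v x‖) ^ 2) volume := by
    apply integrable_of_support_subset (η := η) _ hηc
    · intro x hx; simp [hx]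
    · exact (hη.continuous.mul hvc.norm).pow 2
  have hSint : Integrable (fun x => (η x) ^ 2 * ‖v x‖) volume := by
    apply integrable_of_support_subset (η := η) _ hηc
    · intro x hx; simp [hx]
    · exact ((hη.continuous.pow 2)).mul hvc.norm
  have hJint : Integrable (fun x => (η x * ‖v x‖) * ‖Dη x‖) volume := by
    apply integrable_of_support_subset (η := η) _ hηc
    · intro x hx; simp [hx]
    · exact (hη.continuous.mul hvc.norm).mul hDηc.norm
  -- rewrite the test integral
  have htest2 : (∫ x, F1 x) + (∫ x, F2 x) ≤ 0 := by
    rw [← integral_add hF1int hF2int]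
    rw [show (fun x => F1 x + F2 x) = fun x => (inner ℝ (v x) (gradient ψ x) : ℝ) by
      funext x; rw [hpoint x]]
    calc ∫ x, (inner ℝ (v x) (gradient ψ x) : ℝ)
        = ∫ x, (inner ℝ (gradient U x) (gradient ψ x) : ℝ) := rfl
      _ ≤ 0 := htest
  -- lower bound for ∫ F2
  have hF2low : (∫ x, (η x * ‖v x‖) ^ 2) - γ * ∫ x, (η x) ^ 2 * ‖v x‖ ≤ ∫ x, F2 x := by
    rw [← integral_const_mul, ← integral_sub hXint (hSint.const_mul γ)]
    apply integral_mono (hXint.sub (hSint.const_mul γ)) hF2int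
    intro x
    simp only [Pi.sub_apply]
    by_cases hx : x ∈ K
    · have hDapp : D x (v x) = DU x (v x) + (D x - DU x) (v x) := by
        simp [ContinuousLinearMap.sub_apply]
      have habs : |(D x - DU x) (v x)| ≤ γ * ‖v x‖ := by
        rw [← Real.norm_eq_abs]
        calc ‖(D x - DU x) (v x)‖ ≤ ‖D x - DU x‖ * ‖v x‖ :=
              ContinuousLinearMap.le_opNorm _ _
          _ ≤ γ * ‖v x‖ := mul_le_mul_of_nonneg_right (hclose x hx) (norm_nonneg _)
      simp only [hF2]
      rw [hDapp, key2]
      have h1 := (abs_le.1 habs).1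
      have h2 := hηn x
      nlinarith [sq_nonneg (η x), norm_nonneg (v x)]
    · simp only [hF2, hKcl x hx]
      simp
  -- upper bound for -∫ F1
  have hF1bd : -∫ x, F1 x ≤ 4 * B * ∫ x, (η x * ‖v x‖) * ‖Dη x‖ := by
    have h1 : -∫ x, F1 x ≤ ∫ x, |F1 x| := by
      rw [← integral_neg]
      apply integral_mono hF1int.neg hF1int.abs
      intro x
      simp only [Pi.neg_apply]
      exact neg_le_abs _
    apply le_trans h1
    rw [← integral_const_mul]
    apply integral_mono hF1int.abs (hJint.const_mul _)
    intro x
    have hWb := abs_le.1 (hWbd x)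
    have hDb : |Dη x (v x)| ≤ ‖Dη x‖ * ‖v x‖ := by
      rw [← Real.norm_eq_abs]
      exact ContinuousLinearMap.le_opNorm _ _
    have h2 := hηn x
    simp only [hF1]
    rw [abs_mul]
    have e1 : |η x * (Dη x (v x)) + η x * (Dη x (v x))| = 2 * η x * |Dη x (v x)| := by
      rw [show η x * (Dη x (v x)) + η x * (Dη x (v x)) = 2 * η x * (Dη x (v x)) by ring]
      rw [abs_mul, abs_of_nonneg (by linarith : (0:ℝ) ≤ 2 * η x)]
    rw [e1]
    have hWB2 : |W x + B| ≤ 2 * B := by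
      rw [abs_le]; constructor <;> linarith [hWb.1, hWb.2]
    have hd0 : 0 ≤ |Dη x (v x)| := abs_nonneg _
    nlinarith [norm_nonneg (Dη x), norm_nonneg (v x),
      mul_le_mul_of_nonneg_left hDb (by linarith : (0:ℝ) ≤ 2 * η x),
      mul_le_mul_of_nonneg_right hWB2 (mul_nonneg (by linarith : (0:ℝ) ≤ 2 * η x) hd0)]
  -- conclude
  have h3 : (∫ x, F2 x) ≤ -(∫ x, F1 x) := by linarith [htest2]
  linarith [hF1bd, hF2low, h3]

/-- Full Caccioppoli inequality. -/
lemma caccioppoli (hU : ContDiff ℝ 1 U) {B : ℝ} (hB : ∀ x, |U x| ≤ B)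
    (hsub : ∀ ψ : EE → ℝ, ContDiff ℝ (⊤ : ℕ∞) ψ → HasCompactSupport ψ → (∀ x, 0 ≤ ψ x) →
      ∫ x, (inner ℝ (gradient U x) (gradient ψ x) : ℝ) ≤ 0)
    {η : EE → ℝ} (hη : ContDiff ℝ (⊤ : ℕ∞) η) (hηc : HasCompactSupport η)
    (hηn : ∀ x, 0 ≤ η x) :
    ∫ x, (η x * ‖gradient U x‖) ^ 2 ≤
      16 * B ^ 2 * ∫ x, ‖fderiv ℝ η x‖ ^ 2 := by
  set v : EE → EE := fun x => gradient U x with hv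
  set Dη : EE → (EE →L[ℝ] ℝ) := fun x => fderiv ℝ η x with hDη
  have hDηc : Continuous Dη := hη.continuous_fderiv (by simp)
  have hvc : Continuous v := gradient_continuous hU
  have hB0 : 0 ≤ B := le_trans (abs_nonneg _) (hB 0)
  set X : ℝ := ∫ x, (η x * ‖v x‖) ^ 2 with hX
  set S : ℝ := ∫ x, (η x) ^ 2 * ‖v x‖ with hS
  set J : ℝ := ∫ x, (η x * ‖v x‖) * ‖Dη x‖ with hJ
  set I : ℝ := ∫ x, ‖Dη x‖ ^ 2 with hI
  have hX0 : 0 ≤ X := integral_nonneg fun x => by positivity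
  have hS0 : 0 ≤ S := integral_nonneg fun x => by positivity
  have hI0 : 0 ≤ I := integral_nonneg fun x => by positivity
  -- step 1 : X ≤ 4 B J
  have step1 : X ≤ 4 * B * J := by
    apply le_of_forall_pos_le_add
    intro ε hε
    have hγ : 0 < ε / (S + 1) := by positivity
    have := cacc_step hU hB hsub hη hηc hηn hγ
    have hSS : ε / (S + 1) * S ≤ ε := by
      rw [div_mul_eq_mul_div, div_le_iff₀ (by linarith)]
      nlinarith
    calc X ≤ 4 * B * J + ε / (S + 1) * S := this
      _ ≤ 4 * B * J + ε := by linarith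
  -- step 2 : J ≤ √X √I  (Cauchy-Schwarz)
  have step2 : J ≤ Real.sqrt X * Real.sqrt I := by
    have hpq : Real.HolderConjugate 2 2 := Real.HolderConjugate.two_two
    have hfc : Continuous fun x => η x * ‖v x‖ := hη.continuous.mul hvc.norm
    have hfcs : HasCompactSupport fun x => η x * ‖v x‖ := by
      apply hcs_of_support_subset hηc
      intro x hx; simp [hx]
    have hgc : Continuous fun x => ‖Dη x‖ := hDηc.norm
    have hgcs : HasCompactSupport fun x => ‖Dη x‖ := by
      apply hcs_of_support_subset (hηc.fderiv ℝ)
      intro x hx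
      rw [hDη]
      simp only [hx, norm_zero]
    have hmf : MemLp (fun x => η x * ‖v x‖) (ENNReal.ofReal 2) volume :=
      hfc.memLp_of_hasCompactSupport (μ := volume) hfcs
    have hmg : MemLp (fun x => ‖Dη x‖) (ENNReal.ofReal 2) volume :=
      hgc.memLp_of_hasCompactSupport (μ := volume) hgcs
    have hcs := MeasureTheory.integral_mul_le_Lp_mul_Lq_of_nonneg hpq
      (Filter.Eventually.of_forall fun x => mul_nonneg (hηn x) (norm_nonneg _))
      (Filter.Eventually.of_forall fun x => norm_nonneg _) hmf hmg
    have e1 : ∫ x, (η x * ‖v x‖) ^ (2:ℝ) = X := by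
      rw [hX]
      apply integral_congr_ae
      apply Filter.Eventually.of_forall
      intro x
      simp only [show (2:ℝ) = ((2:ℕ):ℝ) from by norm_num, Real.rpow_natCast]
    have e2 : ∫ x, ‖Dη x‖ ^ (2:ℝ) = I := by
      rw [hI]
      apply integral_congr_ae
      apply Filter.Eventually.of_forall
      intro x
      simp only [show (2:ℝ) = ((2:ℕ):ℝ) from by norm_num, Real.rpow_natCast]
    rw [e1, e2] at hcs
    calc J ≤ X ^ (1/(2:ℝ)) * I ^ (1/(2:ℝ)) := hcs
      _ = Real.sqrt X * Real.sqrt I := by rw [Real.sqrt_eq_rpow, Real.sqrt_eq_rpow]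
  -- absorb
  have hsX : Real.sqrt X ^ 2 = X := Real.sq_sqrt hX0
  have hsI : Real.sqrt I ^ 2 = I := Real.sq_sqrt hI0
  have hsX0 : 0 ≤ Real.sqrt X := Real.sqrt_nonneg _
  have hsI0 : 0 ≤ Real.sqrt I := Real.sqrt_nonneg _
  have hXle : X ≤ 4 * B * (Real.sqrt X * Real.sqrt I) := by
    calc X ≤ 4 * B * J := step1
      _ ≤ 4 * B * (Real.sqrt X * Real.sqrt I) := by
          apply mul_le_mul_of_nonneg_left step2 (by linarith)
  nlinarith [sq_nonneg (Real.sqrt X - 4 * B * Real.sqrt I)]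

end Core

section Main

variable {U : EE → ℝ}

lemma grad_ball_energy_zero (hU : ContDiff ℝ 1 U) {B : ℝ} (hB : ∀ x, |U x| ≤ B)
    (hsub : ∀ ψ : EE → ℝ, ContDiff ℝ (⊤ : ℕ∞) ψ → HasCompactSupport ψ → (∀ x, 0 ≤ ψ x) →
      ∫ x, (inner ℝ (gradient U x) (gradient ψ x) : ℝ) ≤ 0) (j : ℕ) :
    ∫ x in closedBall (0:EE) (4 ^ j), ‖gradient U x‖ ^ 2 = 0 := by
  set v : EE → EE := fun x => gradient U x with hv
  have hvc : Continuous v := gradient_continuous hU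
  have hB0 : 0 ≤ B := le_trans (abs_nonneg _) (hB 0)
  set f : EE → ℝ := fun x => ‖v x‖ ^ 2 with hf
  have hfc : Continuous f := (hvc.norm).pow 2
  set c : ℝ := 16 * B ^ 2 * (64 * Mz ^ 2 * kb) with hc
  have hc0 : 0 ≤ c := by
    have := Mz_nonneg; have := kb_nonneg; positivity
  set T : ℝ := ∫ x in closedBall (0:EE) (4 ^ j), f x with hT
  have hfint : IntegrableOn f (closedBall (0:EE) (4 ^ j)) volume :=
    (hfc.locallyIntegrable).integrableOn_isCompact (isCompact_closedBall _ _)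
  have hT0 : 0 ≤ T :=
    integral_nonneg fun x => by positivity
  -- main inequality for every N ≥ j
  have key : ∀ N : ℕ, j ≤ N → ((N : ℝ) - j) ^ 2 * T ≤ c * N := by
    intro N hjN
    have hcacc := caccioppoli hU hB hsub (etaN_contDiff N) (etaN_hasCompactSupport N)
      (etaN_nonneg N)
    have henergy := etaN_energy N
    have hXNint : Integrable (fun x => (etaN N x * ‖v x‖) ^ 2) volume := by
      apply integrable_of_support_subset (η := etaN N) _ (etaN_hasCompactSupport N)
      · intro x hx; simp [hx]
      · exact ((etaN_contDiff N).continuous.mul hvc.norm).pow 2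
    have hlow : ((N : ℝ) - j) ^ 2 * T ≤ ∫ x, (etaN N x * ‖v x‖) ^ 2 := by
      have h1 : ∫ x in closedBall (0:EE) (4 ^ j), ((N : ℝ) - j) ^ 2 * f x ≤
          ∫ x in closedBall (0:EE) (4 ^ j), (etaN N x * ‖v x‖) ^ 2 := by
        apply setIntegral_mono_on (hfint.const_mul _) (hXNint.integrableOn)
          measurableSet_closedBall
        intro x hx
        rw [mem_closedBall, dist_zero_right] at hx
        have hη := etaN_ge hjN hx
        have hη0 : (0:ℝ) ≤ (N : ℝ) - j := by
          have : (j:ℝ) ≤ N := by exact_mod_cast hjN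
          linarith
        have hle : ((N : ℝ) - j) * ‖v x‖ ≤ etaN N x * ‖v x‖ :=
          mul_le_mul_of_nonneg_right hη (norm_nonneg (v x))
        have ha : (0:ℝ) ≤ ((N : ℝ) - j) * ‖v x‖ := mul_nonneg hη0 (norm_nonneg _)
        have := pow_le_pow_left₀ ha hle 2
        simp only [hf]
        calc ((N : ℝ) - j) ^ 2 * ‖v x‖ ^ 2 = (((N : ℝ) - j) * ‖v x‖) ^ 2 := by ring
          _ ≤ (etaN N x * ‖v x‖) ^ 2 := this
      have h2 : ∫ x in closedBall (0:EE) (4 ^ j), (etaN N x * ‖v x‖) ^ 2 ≤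
          ∫ x, (etaN N x * ‖v x‖) ^ 2 :=
        setIntegral_le_integral hXNint (Filter.Eventually.of_forall fun x => by positivity)
      have h3 : ∫ x in closedBall (0:EE) (4 ^ j), ((N : ℝ) - j) ^ 2 * f x =
          ((N : ℝ) - j) ^ 2 * T := by
        rw [hT, integral_const_mul]
      linarith
    have hup : ∫ x, (etaN N x * ‖v x‖) ^ 2 ≤ c * N := by
      calc ∫ x, (etaN N x * ‖v x‖) ^ 2
          ≤ 16 * B ^ 2 * ∫ x, ‖fderiv ℝ (etaN N) x‖ ^ 2 := hcacc
        _ ≤ 16 * B ^ 2 * (N * (64 * Mz ^ 2 * kb)) := by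
            apply mul_le_mul_of_nonneg_left henergy (by positivity)
        _ = c * N := by rw [hc]; ring
    linarith
  -- conclude T = 0
  by_contra hTne
  have hTpos : 0 < T := lt_of_le_of_ne hT0 (Ne.symm hTne)
  set n : ℕ := ⌈(c * j + c + 1) / T⌉₊ + 1 with hn
  have hn1 : 1 ≤ (n:ℝ) := by
    rw [hn]; push_cast; linarith [Nat.cast_nonneg (α := ℝ) ⌈(c * j + c + 1) / T⌉₊]
  have hnT : c * j + c + 1 ≤ (n:ℝ) * T := by
    have h1 : (c * j + c + 1) / T ≤ (n:ℝ) := by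
      rw [hn]; push_cast
      linarith [Nat.le_ceil ((c * j + c + 1) / T)]
    calc c * j + c + 1 = ((c * j + c + 1) / T) * T := by field_simp
      _ ≤ (n:ℝ) * T := mul_le_mul_of_nonneg_right h1 (le_of_lt hTpos)
  have hkey := key (j + n) (Nat.le_add_right _ _)
  have he : ((j + n : ℕ) : ℝ) - j = (n:ℝ) := by push_cast; ring
  rw [he] at hkey
  have hcast : ((j + n : ℕ) : ℝ) = (j:ℝ) + n := by push_cast; ring
  rw [hcast] at hkey
  -- (n:ℝ)^2 * T ≤ c * (j + n), but n^2 T = n * (n T) ≥ n(cj + c + 1) ≥ cj + cn + 1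
  have hj0 : (0:ℝ) ≤ (j:ℝ) := Nat.cast_nonneg _
  nlinarith [mul_le_mul_of_nonneg_left hnT (by linarith : (0:ℝ) ≤ (n:ℝ)),
    mul_nonneg hc0 hj0]

lemma grad_zero (hU : ContDiff ℝ 1 U) {B : ℝ} (hB : ∀ x, |U x| ≤ B)
    (hsub : ∀ ψ : EE → ℝ, ContDiff ℝ (⊤ : ℕ∞) ψ → HasCompactSupport ψ → (∀ x, 0 ≤ ψ x) →
      ∫ x, (inner ℝ (gradient U x) (gradient ψ x) : ℝ) ≤ 0) (x₀ : EE) :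
    gradient U x₀ = 0 := by
  set v : EE → EE := fun x => gradient U x with hv
  have hvc : Continuous v := gradient_continuous hU
  set f : EE → ℝ := fun x => ‖v x‖ ^ 2 with hf
  have hfc : Continuous f := (hvc.norm).pow 2
  by_contra hne
  have hfpos : 0 < f x₀ := by
    simp only [hf]
    exact pow_pos (norm_pos_iff.2 hne) 2
  -- find a ball containing x₀
  obtain ⟨j, hj⟩ := pow_unbounded_of_one_lt ‖x₀‖ (show (1:ℝ) < 4 by norm_num)
  have hTzero := grad_ball_energy_zero hU hB hsub j
  set O : Set EE := {x | f x₀ / 2 < f x} ∩ ball (0:EE) (4 ^ j) with hO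
  have hOopen : IsOpen O := (isOpen_lt continuous_const hfc).inter isOpen_ball
  have hx₀O : x₀ ∈ O := by
    constructor
    · simp only [Set.mem_setOf_eq]; linarith
    · rw [mem_ball, dist_zero_right]; exact hj
  have hOsub : O ⊆ closedBall (0:EE) (4 ^ j) :=
    le_trans (Set.inter_subset_right) ball_subset_closedBall
  have hfint : IntegrableOn f (closedBall (0:EE) (4 ^ j)) volume :=
    (hfc.locallyIntegrable).integrableOn_isCompact (isCompact_closedBall _ _)
  have hOvolpos : 0 < volume O := hOopen.measure_pos volume ⟨x₀, hx₀O⟩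
  have hOvolfin : volume O < ⊤ :=
    lt_of_le_of_lt (measure_mono hOsub) measure_closedBall_lt_top
  have h1 : ∫ x in O, f x ≤ ∫ x in closedBall (0:EE) (4 ^ j), f x := by
    apply setIntegral_mono_set hfint
      (Filter.Eventually.of_forall fun x => by positivity)
    exact HasSubset.Subset.eventuallyLE hOsub
  have h2 : f x₀ / 2 * (volume O).toReal ≤ ∫ x in O, f x := by
    have : ∫ _x in O, (f x₀ / 2) ≤ ∫ x in O, f x := by
      apply setIntegral_mono_on (integrableOn_const hOvolfin.ne)
        (hfint.mono_set hOsub) hOopen.measurableSet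
      intro x hx
      exact le_of_lt hx.1
    rwa [setIntegral_const, measureReal_def, smul_eq_mul, mul_comm (volume O).toReal] at this
  have h3 : 0 < f x₀ / 2 * (volume O).toReal := by
    apply mul_pos (by linarith)
    exact ENNReal.toReal_pos (ne_of_gt hOvolpos) (ne_of_lt hOvolfin)
  rw [hTzero] at h1
  linarith
end Main

end LiouvilleAux

/-- Liouville theorem for bounded weakly subharmonic functions on `ℝ²`.
Let `U : ℝ² → ℝ` be a bounded `C¹` function that is weakly subharmonic, i.e.
`∫_{ℝ²} ⟪∇U, ∇ψ⟫ ≤ 0` for every nonnegative smooth compactly supported `ψ`.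
Then `U` is constant. -/
theorem liouville_bounded_subharmonic
    (U : EuclideanSpace ℝ (Fin 2) → ℝ)
    (hU : ContDiff ℝ 1 U)
    (hbdd : ∃ B : ℝ, ∀ x, |U x| ≤ B)
    (hsub : ∀ ψ : EuclideanSpace ℝ (Fin 2) → ℝ,
      ContDiff ℝ (⊤ : ℕ∞) ψ → HasCompactSupport ψ → (∀ x, 0 ≤ ψ x) →
      ∫ x, (inner ℝ (gradient U x) (gradient ψ x) : ℝ) ≤ 0) :
    ∀ x y, U x = U y := by
  obtain ⟨B, hB⟩ := hbdd
  have hg : ∀ x, gradient U x = 0 := fun x => grad_zero hU hB hsub x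
  have hfd : ∀ x, fderiv ℝ U x = 0 := by
    intro x
    have h := hg x
    rwa [gradient, map_eq_zero_iff _ (LinearIsometryEquiv.injective _)] at h
  exact fun x y => is_const_of_fderiv_eq_zero (hU.differentiable one_ne_zero) hfd x y
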